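/- Let (s,t) ∈ [0,1]² satisfy g(s)² + g(t)² ≤ 1, and consider the dichotomic POVM on ℂ² with elements M_± = (1/2)·(I ± (g(s)·σ_z + √(1 − g(s)² − g(t)²)·σ_y)). Then M_± are positive semidefinite and sum to I, the noise with respect to σ_z equals N(M, σ_z) = s, and the Lüders disturbance with respect to σ_x, defined as the conditional Shannon entropy H(𝕏|𝕏') of the joint distribution p(b, b') = (1/2)·Σ_± |⟨b'x|√M_±|bx⟩|² (b, b' ∈ {+,−}, |±x⟩ the eigenvectors of σ_x, √M the positive semidefinite square root), equals D_I(M, σ_x) = t. Hence the relation g(N)² + g(D_I)² ≤ 1 for Lüders instruments is tight. -/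

import Mathlib

open Matrix
open scoped ComplexOrder

noncomputable section

/-- The binary-entropy-type function `h(x) = -((1+x)/2)·log₂((1+x)/2) - ((1-x)/2)·log₂((1-x)/2)`
(with the convention `0·log₂ 0 = 0`, automatic since `Real.logb 2 0 = 0`). -/
def hFun (x : ℝ) : ℝ :=
  -(((1 + x) / 2) * Real.logb 2 ((1 + x) / 2)) - ((1 - x) / 2) * Real.logb 2 ((1 - x) / 2)

/-- `g : [0,1] → [0,1]` is the inverse of `h` on `[0,1]`. -/
def gFun : ℝ → ℝ := Function.invFunOn hFun (Set.Icc 0 1)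

/-- The (real) quadratic form `⟨v|M|v⟩`. -/
def qform {d : ℕ} (M : Matrix (Fin d) (Fin d) ℂ) (v : Fin d → ℂ) : ℝ :=
  (star v ⬝ᵥ M.mulVec v).re

/-- `v` is an orthonormal basis (family) of `ℂ^d`. -/
def IsONB {d : ℕ} (v : Fin d → Fin d → ℂ) : Prop :=
  ∀ i j, star (v i) ⬝ᵥ v j = if i = j then 1 else 0

/-- A POVM: a finite family of positive semidefinite matrices summing to the identity. -/
def IsPOVM {d : ℕ} {ι : Type*} [Fintype ι] (M : ι → Matrix (Fin d) (Fin d) ℂ) : Prop :=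
  (∀ m, (M m).PosSemidef) ∧ ∑ m, M m = 1

/-- A density matrix: positive semidefinite with trace 1. -/
def IsDensity {d : ℕ} (ρ : Matrix (Fin d) (Fin d) ℂ) : Prop :=
  ρ.PosSemidef ∧ ρ.trace = 1

/-- The noise `N(M,A) = -Σ_{m,a} p(m,a)·log₂(p(m,a)/p(m))` with `p(m,a) = (1/d)·⟨a|M_m|a⟩`
and `p(m) = (1/d)·Tr[M_m]`, for an observable `A` with orthonormal eigenbasis `v`. -/
def noise {d : ℕ} {ι : Type*} [Fintype ι] (M : ι → Matrix (Fin d) (Fin d) ℂ)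
    (v : Fin d → Fin d → ℂ) : ℝ :=
  -∑ m, ∑ a, ((1 / (d : ℝ)) * qform (M m) (v a)) *
      Real.logb 2 (((1 / (d : ℝ)) * qform (M m) (v a)) / ((1 / (d : ℝ)) * (M m).trace.re))

/-- `H(A|ρ) = -Σ_a ⟨a|ρ|a⟩·log₂⟨a|ρ|a⟩` for an observable with orthonormal eigenbasis `v`. -/
def Hobs {d : ℕ} (v : Fin d → Fin d → ℂ) (ρ : Matrix (Fin d) (Fin d) ℂ) : ℝ :=
  -∑ a, qform ρ (v a) * Real.logb 2 (qform ρ (v a))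

/-- Conditional Shannon entropy `H(X|Y) = -Σ_{x,y} p(x,y)·log₂(p(x,y)/p(y))` of a finite joint
distribution, conditioning on the second variable. -/
def condEnt {X Y : Type*} [Fintype X] [Fintype Y] (p : X → Y → ℝ) : ℝ :=
  -∑ x, ∑ y, p x y * Real.logb 2 (p x y / ∑ x', p x' y)

/-- Pauli matrix σ_x. -/
def σx : Matrix (Fin 2) (Fin 2) ℂ := !![0, 1; 1, 0]
/-- Pauli matrix σ_y. -/
def σy : Matrix (Fin 2) (Fin 2) ℂ := !![0, -Complex.I; Complex.I, 0]
/-- Pauli matrix σ_z. -/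
def σz : Matrix (Fin 2) (Fin 2) ℂ := !![1, 0; 0, -1]

/-- `v·σ = v₁σ_x + v₂σ_y + v₃σ_z` for `v ∈ ℝ³`. -/
def vecσ (v : Fin 3 → ℝ) : Matrix (Fin 2) (Fin 2) ℂ :=
  (v 0 : ℂ) • σx + (v 1 : ℂ) • σy + (v 2 : ℂ) • σz

/-- The canonical orthonormal eigenbasis of σ_z. -/
def basisZ : Fin 2 → Fin 2 → ℂ := fun i j => if i = j then 1 else 0

/-- The canonical orthonormal eigenbasis `|±x⟩` of σ_x. -/
def basisX : Fin 2 → Fin 2 → ℂ := fun i =>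
  ![((1 / Real.sqrt 2 : ℝ) : ℂ),
    if i = 0 then ((1 / Real.sqrt 2 : ℝ) : ℂ) else (-(1 / Real.sqrt 2 : ℝ) : ℂ)]

/-- Eigenvalues `+1, -1` of a (nondegenerate) Pauli observable. -/
def pmEig : Fin 2 → ℂ := fun i => if i = 0 then 1 else -1

/-- The positive semidefinite square root of a positive semidefinite matrix
(the definition `Matrix.PosSemidef.sqrt` of the older Mathlib, since removed). -/
def Matrix.PosSemidef.sqrt {n 𝕜 : Type*} [Fintype n] [DecidableEq n] [RCLike 𝕜]
    {A : Matrix n n 𝕜} (hA : A.PosSemidef) : Matrix n n 𝕜 :=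
  hA.1.eigenvectorUnitary * diagonal (fun i => ((Real.sqrt (hA.1.eigenvalues i) : ℝ) : 𝕜)) *
  (star hA.1.eigenvectorUnitary : Matrix n n 𝕜)

end

noncomputable section Aux

lemma hFun_cont : Continuous hFun := by
  have key : ∀ f : ℝ → ℝ, Continuous f → Continuous (fun x => f x * Real.logb 2 (f x)) := by
    intro f hf
    simpa [Real.logb, mul_div_assoc] using (Real.continuous_mul_log.comp hf).div_const (Real.log 2)
  unfold hFun
  exact ((key _ (by continuity)).neg).sub (key _ (by continuity))

lemma hFun_zero : hFun 0 = 1 := by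
  have h : Real.logb 2 (1/2 : ℝ) = -1 := by
    rw [one_div, Real.logb_inv, Real.logb_self_eq_one] <;> norm_num
  norm_num [hFun, h]

lemma hFun_one : hFun 1 = 0 := by
  norm_num [hFun]

lemma gFun_spec {x : ℝ} (hx : x ∈ Set.Icc (0:ℝ) 1) :
    gFun x ∈ Set.Icc (0:ℝ) 1 ∧ hFun (gFun x) = x := by
  have hsub : Set.Icc (0:ℝ) 1 ⊆ hFun '' Set.Icc 0 1 := by
    have := intermediate_value_Icc' (by norm_num : (0:ℝ) ≤ 1) hFun_cont.continuousOn
    rwa [hFun_zero, hFun_one] at this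
  obtain ⟨a, ha, hfa⟩ := hsub hx
  exact ⟨Function.invFunOn_mem ⟨a, ha, hfa⟩, Function.invFunOn_eq ⟨a, ha, hfa⟩⟩

lemma psd2 (p w c : ℝ) (hp : 0 ≤ p) (hw : 0 ≤ w) (h : c^2 ≤ p * w) :
    (!![(p:ℂ), -(c:ℂ)*Complex.I; (c:ℂ)*Complex.I, (w:ℂ)]).PosSemidef := by
  refine Matrix.PosSemidef.of_dotProduct_mulVec_nonneg ?_ ?_
  · ext i j
    fin_cases i <;> fin_cases j <;>
      simp [Matrix.conjTranspose_apply, Complex.ext_iff]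
  · intro x
    rw [Complex.nonneg_iff]
    set a := (x 0).re; set b := (x 0).im; set cc := (x 1).re; set d := (x 1).im
    have hre : (star x ⬝ᵥ (!![(p:ℂ), -(c:ℂ)*Complex.I; (c:ℂ)*Complex.I, (w:ℂ)]).mulVec x).re
        = p*(a^2+b^2) + w*(cc^2+d^2) + 2*c*(a*d - b*cc) := by
      simp [Matrix.mulVec, dotProduct, Fin.sum_univ_two, Complex.add_re,
        Complex.mul_re, Complex.mul_im, Complex.ofReal_re, Complex.ofReal_im]
      ring
    have him : (star x ⬝ᵥ (!![(p:ℂ), -(c:ℂ)*Complex.I; (c:ℂ)*Complex.I, (w:ℂ)]).mulVec x).im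
        = 0 := by
      simp [Matrix.mulVec, dotProduct, Fin.sum_univ_two, Complex.add_im,
        Complex.mul_re, Complex.mul_im, Complex.ofReal_re, Complex.ofReal_im]
      ring
    refine ⟨?_, him.symm⟩
    rw [hre]
    rcases eq_or_lt_of_le hw with hw0 | hw0
    · have hc : c = 0 := by nlinarith
      rw [← hw0, hc]; nlinarith [sq_nonneg a, sq_nonneg b]
    · nlinarith [sq_nonneg (w*d + c*a), sq_nonneg (w*cc - c*b), sq_nonneg a, sq_nonneg b,
        mul_nonneg (sub_nonneg.2 h) (add_nonneg (sq_nonneg a) (sq_nonneg b))]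

lemma sq2 (p w c : ℝ) :
    (!![(p:ℂ), -(c:ℂ)*Complex.I; (c:ℂ)*Complex.I, (w:ℂ)])^2 =
    !![((p^2+c^2 : ℝ):ℂ), -((c*(p+w) : ℝ):ℂ)*Complex.I;
       ((c*(p+w) : ℝ):ℂ)*Complex.I, ((w^2+c^2 : ℝ):ℂ)] := by
  ext i j
  fin_cases i <;> fin_cases j <;>
    (simp [pow_two, Matrix.mul_apply, Fin.sum_univ_two]; push_cast;
     first
      | linear_combination ((c:ℂ)^2) * Complex.I_sq
      | linear_combination (-(c:ℂ)^2) * Complex.I_sq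
      | ring)

lemma qf0 (p w c : ℝ) :
    qform !![(p:ℂ), -(c:ℂ)*Complex.I; (c:ℂ)*Complex.I, (w:ℂ)] (basisZ 0) = p := by
  simp [qform, basisZ, Matrix.mulVec, dotProduct, Fin.sum_univ_two]

lemma qf1 (p w c : ℝ) :
    qform !![(p:ℂ), -(c:ℂ)*Complex.I; (c:ℂ)*Complex.I, (w:ℂ)] (basisZ 1) = w := by
  simp [qform, basisZ, Matrix.mulVec, dotProduct, Fin.sum_univ_two]

lemma tr2 (p w c : ℝ) :
    (!![(p:ℂ), -(c:ℂ)*Complex.I; (c:ℂ)*Complex.I, (w:ℂ)]).trace.re = p + w := by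
  simp [Matrix.trace_fin_two]

lemma hkc2 : ((Real.sqrt 2 : ℝ) : ℂ)⁻¹^2 = 1/2 := by
  rw [← Complex.ofReal_inv, ← Complex.ofReal_pow]
  norm_cast
  rw [inv_pow, Real.sq_sqrt] <;> norm_num

lemma ip00 (p w c : ℝ) :
    star (basisX 0) ⬝ᵥ (!![(p:ℂ), -(c:ℂ)*Complex.I; (c:ℂ)*Complex.I, (w:ℂ)]).mulVec (basisX 0)
      = (((p+w)/2 : ℝ) : ℂ) := by
  simp [basisX, Matrix.mulVec, dotProduct, Fin.sum_univ_two]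
  push_cast
  linear_combination (p + w : ℂ) * hkc2

lemma ip10 (p w c : ℝ) :
    star (basisX 1) ⬝ᵥ (!![(p:ℂ), -(c:ℂ)*Complex.I; (c:ℂ)*Complex.I, (w:ℂ)]).mulVec (basisX 0)
      = (((p-w)/2 : ℝ) : ℂ) - (c:ℂ)*Complex.I := by
  simp [basisX, Matrix.mulVec, dotProduct, Fin.sum_univ_two]
  push_cast
  linear_combination (p - w : ℂ) * hkc2 - 2*(c:ℂ)*Complex.I*hkc2

lemma ip01 (p w c : ℝ) :
    star (basisX 0) ⬝ᵥ (!![(p:ℂ), -(c:ℂ)*Complex.I; (c:ℂ)*Complex.I, (w:ℂ)]).mulVec (basisX 1)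
      = (((p-w)/2 : ℝ) : ℂ) + (c:ℂ)*Complex.I := by
  simp [basisX, Matrix.mulVec, dotProduct, Fin.sum_univ_two]
  push_cast
  linear_combination (p - w : ℂ) * hkc2 + 2*(c:ℂ)*Complex.I*hkc2

lemma ip11 (p w c : ℝ) :
    star (basisX 1) ⬝ᵥ (!![(p:ℂ), -(c:ℂ)*Complex.I; (c:ℂ)*Complex.I, (w:ℂ)]).mulVec (basisX 1)
      = (((p+w)/2 : ℝ) : ℂ) := by
  simp [basisX, Matrix.mulVec, dotProduct, Fin.sum_univ_two]
  push_cast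
  linear_combination (p + w : ℂ) * hkc2

lemma normsq_mk (x y : ℝ) : ‖(x:ℂ) + (y:ℂ)*Complex.I‖^2 = x^2 + y^2 := by
  rw [Complex.sq_norm, Complex.normSq_apply]
  simp
  ring

lemma normsq_mk' (x y : ℝ) : ‖(x:ℂ) - (y:ℂ)*Complex.I‖^2 = x^2 + y^2 := by
  rw [Complex.sq_norm, Complex.normSq_apply]
  simp
  ring

lemma normsq_real (x : ℝ) : ‖(x:ℂ)‖^2 = x^2 := by
  rw [Complex.norm_real]
  exact sq_abs x

open scoped MatrixOrder in
lemma eq_sqrt_of_sq_eq' {A B : Matrix (Fin 2) (Fin 2) ℂ} (hB : B.PosSemidef) (hA : A.PosSemidef)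
    (h : B ^ 2 = A) : B = hA.sqrt := by
  have e1 : hA.sqrt = cfc Real.sqrt A := by
    rw [hA.1.cfc_eq]; simp [Matrix.PosSemidef.sqrt, Matrix.IsHermitian.cfc, Function.comp_def]
  rw [e1, ← cfcₙ_eq_cfc (hf0 := by simp), ← CFC.sqrt_eq_real_sqrt A hA.nonneg]
  exact (CFC.sqrt_unique (by rw [← sq, h]) hB.nonneg).symm

end Aux

set_option maxHeartbeats 1000000 in
/-- For `(s,t) ∈ [0,1]²` with `g(s)² + g(t)² ≤ 1`, the dichotomic POVM with elements
`M_± = (1/2)(I ± (g(s)σ_z + √(1−g(s)²−g(t)²)σ_y))` is positive semidefinite, sums to `I`,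
has `N(M,σ_z) = s`, and its Lüders disturbance satisfies `D_I(M,σ_x) = t`. -/
theorem stmt_18 (s t : ℝ) (hs : s ∈ Set.Icc (0 : ℝ) 1) (ht : t ∈ Set.Icc (0 : ℝ) 1)
    (hgst : gFun s ^ 2 + gFun t ^ 2 ≤ 1)
    (M : Fin 2 → Matrix (Fin 2) (Fin 2) ℂ)
    (hMdef : ∀ i : Fin 2, M i = (1 / 2 : ℂ) •
      (1 + (if i = 0 then 1 else -1 : ℂ) •
        ((gFun s : ℂ) • σz + ((Real.sqrt (1 - gFun s ^ 2 - gFun t ^ 2) : ℝ) : ℂ) • σy))) :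
    ∃ hPSD : ∀ i, (M i).PosSemidef,
      (∑ i, M i = 1) ∧
      noise M basisZ = s ∧
      condEnt (fun b b' : Fin 2 =>
        (1 / 2 : ℝ) * ∑ i, ‖star (basisX b') ⬝ᵥ ((hPSD i).sqrt.mulVec (basisX b))‖ ^ 2) = t := by
  obtain ⟨A, hAdef⟩ : ∃ x, x = gFun s := ⟨_, rfl⟩
  obtain ⟨G, hGdef⟩ : ∃ x, x = gFun t := ⟨_, rfl⟩
  rw [← hAdef, ← hGdef] at hgst hMdef
  obtain ⟨⟨hA0, hA1⟩, hhA⟩ : A ∈ Set.Icc (0:ℝ) 1 ∧ hFun A = s := by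
    rw [hAdef]; exact gFun_spec hs
  obtain ⟨⟨hG0, hG1⟩, hhG⟩ : G ∈ Set.Icc (0:ℝ) 1 ∧ hFun G = t := by
    rw [hGdef]; exact gFun_spec ht
  have hCnn : 0 ≤ 1 - A^2 - G^2 := by linarith
  obtain ⟨C, hCdef⟩ : ∃ x, x = Real.sqrt (1 - A^2 - G^2) := ⟨_, rfl⟩
  rw [← hCdef] at hMdef
  have hC0 : 0 ≤ C := hCdef ▸ Real.sqrt_nonneg _
  have hC2 : C^2 = 1 - A^2 - G^2 := hCdef ▸ Real.sq_sqrt hCnn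
  -- explicit matrices
  have hM0 : M 0 = !![(((1+A)/2 : ℝ):ℂ), -((C/2 : ℝ):ℂ)*Complex.I;
      ((C/2 : ℝ):ℂ)*Complex.I, (((1-A)/2 : ℝ):ℂ)] := by
    rw [hMdef 0]
    ext i j
    fin_cases i <;> fin_cases j <;>
      (simp [σz, σy, Matrix.one_apply]; push_cast; ring)
  have hM1 : M 1 = !![(((1-A)/2 : ℝ):ℂ), -((-(C/2) : ℝ):ℂ)*Complex.I;
      ((-(C/2) : ℝ):ℂ)*Complex.I, (((1+A)/2 : ℝ):ℂ)] := by
    rw [hMdef 1]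
    ext i j
    fin_cases i <;> fin_cases j <;>
      (simp [σz, σy, Matrix.one_apply]; push_cast; ring)
  have hPSD : ∀ i, (M i).PosSemidef := by
    rw [Fin.forall_fin_two]
    constructor
    · rw [hM0]; exact psd2 _ _ _ (by linarith only [hA0]) (by linarith only [hA1]) (by nlinarith only [hC2, sq_nonneg G, hA0, hA1])
    · rw [hM1]; exact psd2 _ _ _ (by linarith only [hA1]) (by linarith only [hA0]) (by nlinarith only [hC2, sq_nonneg G, hA0, hA1])
  -- scalar setup for the square root
  obtain ⟨r, hrdef⟩ : ∃ x, x = Real.sqrt (1 - G^2) := ⟨_, rfl⟩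
  have hr0 : 0 ≤ r := hrdef ▸ Real.sqrt_nonneg _
  have hr2 : r^2 = 1 - G^2 := hrdef ▸ Real.sq_sqrt (by nlinarith)
  have hr1 : r ≤ 1 := by nlinarith only [hr2, hr0, sq_nonneg G]
  have hACr : A^2 + C^2 = r^2 := by rw [hC2, hr2]; ring
  obtain ⟨u, hudef⟩ : ∃ x, x = Real.sqrt ((1+r)/2) := ⟨_, rfl⟩
  obtain ⟨v, hvdef⟩ : ∃ x, x = Real.sqrt ((1-r)/2) := ⟨_, rfl⟩
  have hu0 : 0 ≤ u := hudef ▸ Real.sqrt_nonneg _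
  have hv0 : 0 ≤ v := hvdef ▸ Real.sqrt_nonneg _
  have hu2 : u^2 = (1+r)/2 := hudef ▸ Real.sq_sqrt (by linarith)
  have hv2 : v^2 = (1-r)/2 := hvdef ▸ Real.sq_sqrt (by linarith)
  have huv : u * v = G/2 := by
    rw [hudef, hvdef, ← Real.sqrt_mul (by linarith)]
    have : (1+r)/2 * ((1-r)/2) = (G/2)^2 := by nlinarith
    rw [this, Real.sqrt_sq (by linarith)]
  have huv' : v ≤ u := by nlinarith only [hu2, hv2, hu0, hv0, hr0]
  obtain ⟨α, hαdef⟩ : ∃ x, x = (u+v)/2 := ⟨_, rfl⟩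
  obtain ⟨β, hβdef⟩ : ∃ x, x = (u-v)/(2*r) := ⟨_, rfl⟩
  have hupos : 0 < u := by nlinarith only [hu2, hu0, hr0]
  have hαpos : 0 < α := by rw [hαdef]; linarith
  have hβ0 : 0 ≤ β := hβdef ▸ div_nonneg (by linarith) (by linarith)
  have k1 : α^2 + β^2*(A^2+C^2) = 1/2 := by
    rcases eq_or_lt_of_le hr0 with h0 | hpos
    · have hGsq : G^2 = 1 := by
        have h00 : r^2 = 0 := by rw [← h0]; ring
        linarith only [h00, hr2]
      have hG1' : G = 1 := by nlinarith only [hGsq, hG0, hG1]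
      have hA' : A = 0 := by nlinarith only [hgst, hGsq, hA0]
      have hC' : C = 0 := by nlinarith only [hC2, hGsq, hC0, hA']
      have hβ' : β = 0 := by rw [hβdef, ← h0]; norm_num
      rw [hβ', hA', hC', hαdef]
      nlinarith only [hu2, hv2, huv, hG1', h0]
    · have hβr : β * r = (u-v)/2 := by
        rw [hβdef]; field_simp
      have hb : β^2*(A^2+C^2) = (β*r)^2 := by rw [hACr]; ring
      rw [hb, hβr, hαdef]; nlinarith only [hu2, hv2]
  have k2 : α^2 - β^2*(A^2+C^2) = G/2 := by
    rcases eq_or_lt_of_le hr0 with h0 | hpos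
    · have hGsq : G^2 = 1 := by
        have h00 : r^2 = 0 := by rw [← h0]; ring
        linarith only [h00, hr2]
      have hG1' : G = 1 := by nlinarith only [hGsq, hG0, hG1]
      have hA' : A = 0 := by nlinarith only [hgst, hGsq, hA0]
      have hC' : C = 0 := by nlinarith only [hC2, hGsq, hC0, hA']
      have hβ' : β = 0 := by rw [hβdef, ← h0]; norm_num
      rw [hβ', hA', hC', hαdef]
      nlinarith only [hu2, hv2, huv, hG1', h0]
    · have hβr : β * r = (u-v)/2 := by
        rw [hβdef]; field_simp
      have hb : β^2*(A^2+C^2) = (β*r)^2 := by rw [hACr]; ring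
      rw [hb, hβr, hαdef]; nlinarith only [huv]
  have huv2 : u^2 - v^2 = r := by rw [hu2, hv2]; ring
  have h2ab' : ∀ hpos : 0 < r, 2*α*β = 1/2 := by
    intro hpos
    rw [hαdef, hβdef]
    field_simp
    linear_combination huv2
  have k3 : 2*α*β*A = A/2 := by
    rcases eq_or_lt_of_le hr0 with h0 | hpos
    · have hGsq : G^2 = 1 := by
        have h00 : r^2 = 0 := by rw [← h0]; ring
        linarith only [h00, hr2]
      have hA' : A = 0 := by nlinarith only [hgst, hGsq, hA0]
      rw [hA']; ring
    · rw [show 2*α*β*A = (2*α*β)*A by ring, h2ab' hpos]; ring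
  have k4 : 2*α*β*C = C/2 := by
    rcases eq_or_lt_of_le hr0 with h0 | hpos
    · have hGsq : G^2 = 1 := by
        have h00 : r^2 = 0 := by rw [← h0]; ring
        linarith only [h00, hr2]
      have hA' : A = 0 := by nlinarith only [hgst, hGsq, hA0]
      have hC' : C = 0 := by nlinarith only [hC2, hGsq, hC0, hA']
      rw [hC']; ring
    · rw [show 2*α*β*C = (2*α*β)*C by ring, h2ab' hpos]; ring
  have hβA0 : 0 ≤ β*A := mul_nonneg hβ0 hA0
  have hβA : β*A ≤ α := by nlinarith only [k2, hG0, hαpos, hβA0, sq_nonneg (β*C)]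
  -- square root matrices
  have hS0psd : (!![((α+β*A : ℝ):ℂ), -((β*C : ℝ):ℂ)*Complex.I;
      ((β*C : ℝ):ℂ)*Complex.I, ((α-β*A : ℝ):ℂ)]).PosSemidef :=
    psd2 _ _ _ (by linarith only [hαpos, hβA0]) (by linarith only [hβA]) (by nlinarith only [k2, hG0])
  have hS1psd : (!![((α-β*A : ℝ):ℂ), -((-(β*C) : ℝ):ℂ)*Complex.I;
      ((-(β*C) : ℝ):ℂ)*Complex.I, ((α+β*A : ℝ):ℂ)]).PosSemidef :=
    psd2 _ _ _ (by linarith only [hβA]) (by linarith only [hαpos, hβA0]) (by nlinarith only [k2, hG0])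
  have e00 : ((α+β*A)^2 + (β*C)^2 : ℝ) = (1+A)/2 := by linear_combination k1 + k3
  have e11 : ((α-β*A)^2 + (β*C)^2 : ℝ) = (1-A)/2 := by linear_combination k1 - k3
  have e01 : (β*C*((α+β*A)+(α-β*A)) : ℝ) = C/2 := by linear_combination k4
  have e00' : ((α+β*A)^2 + (-(β*C))^2 : ℝ) = (1+A)/2 := by linear_combination k1 + k3
  have e11' : ((α-β*A)^2 + (-(β*C))^2 : ℝ) = (1-A)/2 := by linear_combination k1 - k3
  have e01' : (-(β*C)*((α-β*A)+(α+β*A)) : ℝ) = -(C/2) := by linear_combination -k4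
  have hsq0 : (hPSD 0).sqrt = !![((α+β*A : ℝ):ℂ), -((β*C : ℝ):ℂ)*Complex.I;
      ((β*C : ℝ):ℂ)*Complex.I, ((α-β*A : ℝ):ℂ)] := by
    refine (eq_sqrt_of_sq_eq' hS0psd (hPSD 0) ?_).symm
    rw [sq2, hM0, e00, e11, e01]
  have hsq1 : (hPSD 1).sqrt = !![((α-β*A : ℝ):ℂ), -((-(β*C) : ℝ):ℂ)*Complex.I;
      ((-(β*C) : ℝ):ℂ)*Complex.I, ((α+β*A : ℝ):ℂ)] := by
    refine (eq_sqrt_of_sq_eq' hS1psd (hPSD 1) ?_).symm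
    rw [sq2, hM1, e11', e00', e01']
  refine ⟨hPSD, ?_, ?_, ?_⟩
  · rw [Fin.sum_univ_two, hM0, hM1]
    ext i j
    fin_cases i <;> fin_cases j <;>
      (simp [Matrix.one_apply]; try push_cast; try ring)
  · -- noise
    have htr0 : (M 0).trace.re = 1 := by rw [hM0, tr2]; ring
    have htr1 : (M 1).trace.re = 1 := by rw [hM1, tr2]; ring
    have hq00 : qform (M 0) (basisZ 0) = (1+A)/2 := by rw [hM0]; exact qf0 _ _ _
    have hq01 : qform (M 0) (basisZ 1) = (1-A)/2 := by rw [hM0]; exact qf1 _ _ _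
    have hq10 : qform (M 1) (basisZ 0) = (1-A)/2 := by rw [hM1]; exact qf0 _ _ _
    have hq11 : qform (M 1) (basisZ 1) = (1+A)/2 := by rw [hM1]; exact qf1 _ _ _
    unfold noise
    rw [Fin.sum_univ_two, Fin.sum_univ_two, Fin.sum_univ_two,
      hq00, hq01, hq10, hq11, htr0, htr1, ← hhA]
    norm_num
    unfold hFun
    ring
  · -- disturbance
    have hfuneq : ∀ b b' : Fin 2,
        (1 / 2 : ℝ) * ∑ i, ‖star (basisX b') ⬝ᵥ ((hPSD i).sqrt.mulVec (basisX b))‖ ^ 2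
        = if b = b' then (1+G)/4 else (1-G)/4 := by
      refine Fin.forall_fin_two.mpr ⟨Fin.forall_fin_two.mpr ⟨?_, ?_⟩,
        Fin.forall_fin_two.mpr ⟨?_, ?_⟩⟩ <;> rw [Fin.sum_univ_two, hsq0, hsq1]
      · rw [if_pos rfl, ip00, ip00,
          show ((α+β*A) + (α-β*A))/2 = α by ring, show ((α-β*A) + (α+β*A))/2 = α by ring,
          normsq_real]
        linarith only [k1, k2]
      · rw [if_neg (by decide), ip10, ip10,
          show ((α+β*A) - (α-β*A))/2 = β*A by ring, show ((α-β*A) - (α+β*A))/2 = -(β*A) by ring,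
          normsq_mk']
        rw [show ((-(β*A):ℝ):ℂ) - ((-(β*C):ℝ):ℂ)*Complex.I
            = -(((β*A:ℝ):ℂ) - ((β*C:ℝ):ℂ)*Complex.I) by push_cast; ring,
          norm_neg, normsq_mk']
        linear_combination (k1 - k2)/2
      · rw [if_neg (by decide), ip01, ip01,
          show ((α+β*A) - (α-β*A))/2 = β*A by ring, show ((α-β*A) - (α+β*A))/2 = -(β*A) by ring,
          normsq_mk]
        rw [show ((-(β*A):ℝ):ℂ) + ((-(β*C):ℝ):ℂ)*Complex.I
            = -(((β*A:ℝ):ℂ) + ((β*C:ℝ):ℂ)*Complex.I) by push_cast; ring,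
          norm_neg, normsq_mk]
        linear_combination (k1 - k2)/2
      · rw [if_pos rfl, ip11, ip11,
          show ((α+β*A) + (α-β*A))/2 = α by ring, show ((α-β*A) + (α+β*A))/2 = α by ring,
          normsq_real]
        linarith only [k1, k2]
    unfold condEnt
    simp only [hfuneq]
    rw [Fin.sum_univ_two, Fin.sum_univ_two, Fin.sum_univ_two, Fin.sum_univ_two]
    norm_num
    rw [show (1+G)/4 + (1-G)/4 = (1/2 : ℝ) by ring]
    rw [show (1-G)/4 + (1+G)/4 = (1/2 : ℝ) by ring,
      show (1+G)/4 / (1/2 : ℝ) = (1+G)/2 by ring,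
      show (1-G)/4 / (1/2 : ℝ) = (1-G)/2 by ring, ← hhG]
    unfold hFun
    ring
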